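/- There is no C² function C : U → ℝ on a nonempty open set U ⊆ ℝ⁴ containing a point with σ(y - x) ≠ 0, satisfying ∂C/∂x = x(ρ - z) - y and ∂C/∂u = σ(y - x) simultaneously. -/

import Mathlib

/-- Null permutations 4312/4321: there is no C² function C on ℝ⁴ satisfying
∂C/∂x = x(ρ - z) - y and ∂C/∂u = σ(y - x) on a nonempty open set containing a
point with σ(y - x) ≠ 0. -/
theorem null_permutation_4312 (σ ρ β : ℝ) (hσ : 0 < σ)
    (U : Set (ℝ × ℝ × ℝ × ℝ)) (hU : IsOpen U)
    (q₀ : ℝ × ℝ × ℝ × ℝ) (hq₀ : q₀ ∈ U) (h₀ : σ * (q₀.2.1 - q₀.1) ≠ 0) :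
    ¬ ∃ C : ℝ × ℝ × ℝ × ℝ → ℝ, ContDiff ℝ 2 C ∧
      (∀ q ∈ U, fderiv ℝ C q (1, 0, 0, 0) = q.1 * (ρ - q.2.2.1) - q.2.1) ∧
      (∀ q ∈ U, fderiv ℝ C q (0, 0, 0, 1) = σ * (q.2.1 - q.1)) := by
  rintro ⟨C, hC, hx, hu⟩
  have hdf : DifferentiableAt ℝ (fderiv ℝ C) q₀ :=
    (hC.fderiv_right (m := 1) (by norm_num)).differentiable one_ne_zero q₀
  -- apply-at-vector lemma
  have key : ∀ v w : ℝ × ℝ × ℝ × ℝ,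
      fderiv ℝ (fun q => fderiv ℝ C q v) q₀ w = fderiv ℝ (fderiv ℝ C) q₀ w v := by
    intro v w
    rw [fderiv_clm_apply hdf (differentiableAt_const v)]
    simp
  -- eventual equalities on the open set U
  have hUx : U ∈ nhds q₀ := hU.mem_nhds hq₀
  have e1 : (fun q : ℝ × ℝ × ℝ × ℝ => fderiv ℝ C q (1, 0, 0, 0)) =ᶠ[nhds q₀]
      (fun q => q.1 * (ρ - q.2.2.1) - q.2.1) :=
    Filter.eventually_of_mem hUx hx
  have e4 : (fun q : ℝ × ℝ × ℝ × ℝ => fderiv ℝ C q (0, 0, 0, 1)) =ᶠ[nhds q₀]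
      (fun q => σ * (q.2.1 - q.1)) :=
    Filter.eventually_of_mem hUx hu
  -- explicit derivatives of the right-hand sides
  have px : HasFDerivAt (fun q : ℝ × ℝ × ℝ × ℝ => q.1)
      (ContinuousLinearMap.fst ℝ ℝ (ℝ × ℝ × ℝ)) q₀ := hasFDerivAt_fst
  have py : HasFDerivAt (fun q : ℝ × ℝ × ℝ × ℝ => q.2.1)
      ((ContinuousLinearMap.fst ℝ ℝ (ℝ × ℝ)).comp
        ((ContinuousLinearMap.snd ℝ ℝ (ℝ × ℝ × ℝ)))) q₀ :=
    hasFDerivAt_fst.comp q₀ hasFDerivAt_snd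
  have pz : HasFDerivAt (fun q : ℝ × ℝ × ℝ × ℝ => q.2.2.1)
      ((ContinuousLinearMap.fst ℝ ℝ ℝ).comp
        ((ContinuousLinearMap.snd ℝ ℝ (ℝ × ℝ)).comp
          (ContinuousLinearMap.snd ℝ ℝ (ℝ × ℝ × ℝ)))) q₀ :=
    hasFDerivAt_fst.comp q₀ (hasFDerivAt_snd.comp q₀ hasFDerivAt_snd)
  have hg1 : HasFDerivAt (fun q : ℝ × ℝ × ℝ × ℝ => q.1 * (ρ - q.2.2.1) - q.2.1)
      _ q₀ := ((px.mul ((hasFDerivAt_const ρ q₀).sub pz)).sub py)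
  have hg2 : HasFDerivAt (fun q : ℝ × ℝ × ℝ × ℝ => σ * (q.2.1 - q.1))
      _ q₀ := (py.sub px).const_mul σ
  -- compute the two mixed partials
  have h1 : fderiv ℝ (fderiv ℝ C) q₀ (0, 0, 0, 1) (1, 0, 0, 0) = 0 := by
    rw [← key]
    rw [e1.fderiv_eq, hg1.fderiv]
    simp
  have h2 : fderiv ℝ (fderiv ℝ C) q₀ (1, 0, 0, 0) (0, 0, 0, 1) = -σ := by
    rw [← key]
    rw [e4.fderiv_eq, hg2.fderiv]
    simp
  have hsym := ((hC.contDiffAt (x := q₀)).isSymmSndFDerivAt (by norm_num)) (0, 0, 0, 1) (1, 0, 0, 0)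
  rw [h1, h2] at hsym
  exact absurd hsym.symm (by linarith)
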